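/- Let f : [a,b] → ℝ be regulated and g : [a,b] → ℝ be regulated and of bounded variation. Then the Young integral (Y)∫_a^b f dg and the Kurzweil–Stieltjes integral (K)∫_a^b f dg both exist and are equal. -/

import Mathlib

open Set Filter

/-- A tagged partition of `[a,b]`: points `a = pts 0 < pts 1 < … < pts n = b`
with tags `tag j ∈ [pts j, pts (j+1)]`. -/
structure TaggedPartition (a b : ℝ) where
  n : ℕ
  pts : ℕ → ℝ
  tag : ℕ → ℝ
  n_pos : 0 < n
  pts_zero : pts 0 = a
  pts_last : pts n = b
  pts_mono : ∀ j < n, pts j < pts (j + 1)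
  tag_mem : ∀ j < n, tag j ∈ Set.Icc (pts j) (pts (j + 1))

/-- Riemann–Stieltjes sum `S(f, dg, P)`. -/
def RS (f g : ℝ → ℝ) {a b : ℝ} (P : TaggedPartition a b) : ℝ :=
  ∑ j ∈ Finset.range P.n, f (P.tag j) * (g (P.pts (j + 1)) - g (P.pts j))

/-- `P` is `δ`-fine. -/
def IsFine (δ : ℝ → ℝ) {a b : ℝ} (P : TaggedPartition a b) : Prop :=
  ∀ j < P.n, Set.Icc (P.pts j) (P.pts (j + 1)) ⊆
    Set.Icc (P.tag j - δ (P.tag j)) (P.tag j + δ (P.tag j))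

/-- The Kurzweil–Stieltjes integral `(K)∫_a^b f dg` exists and equals `I`. -/
def HasKS (f g : ℝ → ℝ) (a b I : ℝ) : Prop :=
  ∀ ε > 0, ∃ δ : ℝ → ℝ, (∀ t ∈ Set.Icc a b, 0 < δ t ∧ δ t < 1) ∧
    ∀ P : TaggedPartition a b, IsFine δ P → |RS f g P - I| < ε

/-- The division of `P` contains all points of the finite set `D`. -/
def Refines {a b : ℝ} (P : TaggedPartition a b) (D : Finset ℝ) : Prop :=
  ∀ x ∈ D, ∃ j ≤ P.n, P.pts j = x

/-- All tags of `P` lie strictly inside the corresponding subintervals. -/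
def InteriorTags {a b : ℝ} (P : TaggedPartition a b) : Prop :=
  ∀ j < P.n, P.pts j < P.tag j ∧ P.tag j < P.pts (j + 1)

/-- The Dushnik integral `(D)∫_a^b f dg` exists and equals `I`. -/
def HasDushnik (f g : ℝ → ℝ) (a b I : ℝ) : Prop :=
  ∀ ε > 0, ∃ D : Finset ℝ, ↑D ⊆ Set.Icc a b ∧
    ∀ P : TaggedPartition a b, Refines P D → InteriorTags P → |RS f g P - I| < ε

/-- `f` is regulated on `[a,b]`: it has finite one-sided limits (within `[a,b]`)
at every point where they make sense. -/
def Regulated (f : ℝ → ℝ) (a b : ℝ) : Prop :=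
  (∀ t ∈ Set.Ioc a b, ∃ L : ℝ, Filter.Tendsto f (nhdsWithin t (Set.Ico a t)) (nhds L)) ∧
  (∀ t ∈ Set.Ico a b, ∃ L : ℝ, Filter.Tendsto f (nhdsWithin t (Set.Ioc t b)) (nhds L))

/-- The Young sum `S_Y(f, dg, P)`, where `gl t = g(t-)` and `gr t = g(t+)`
are the one-sided limit functions of `g`. -/
def YS (f gl gr g : ℝ → ℝ) {a b : ℝ} (P : TaggedPartition a b) : ℝ :=
  ∑ j ∈ Finset.range P.n,
    (f (P.pts j) * (gr (P.pts j) - g (P.pts j))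
      + f (P.tag j) * (gl (P.pts (j + 1)) - gr (P.pts j))
      + f (P.pts (j + 1)) * (g (P.pts (j + 1)) - gl (P.pts (j + 1))))

/-- The Young integral `(Y)∫_a^b f dg` exists and equals `I` (here `gl`, `gr`
are the one-sided limit functions of `g`). -/
def HasYoung (f gl gr g : ℝ → ℝ) (a b I : ℝ) : Prop :=
  ∀ ε > 0, ∃ D : Finset ℝ, ↑D ⊆ Set.Icc a b ∧
    ∀ P : TaggedPartition a b, Refines P D → InteriorTags P → |YS f gl gr g P - I| < ε

/-- `f` is a finite step function on `[a,b]`: constant on the open subintervals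
of some division `a = σ 0 < … < σ m = b`. -/
def IsStepFunction (f : ℝ → ℝ) (a b : ℝ) : Prop :=
  ∃ (m : ℕ) (σ : ℕ → ℝ), 0 < m ∧ σ 0 = a ∧ σ m = b ∧ (∀ k < m, σ k < σ (k + 1)) ∧
    ∀ k < m, ∀ x ∈ Set.Ioo (σ k) (σ (k + 1)), ∀ y ∈ Set.Ioo (σ k) (σ (k + 1)), f x = f y

/-- The (real-valued) total variation of `g` on `[a,b]`. -/
noncomputable def var (g : ℝ → ℝ) (a b : ℝ) : ℝ :=
  (eVariationOn g (Set.Icc a b)).toReal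
namespace Stmt18

lemma chain_mono {p : ℕ → ℝ} {n : ℕ} (h : ∀ j < n, p j < p (j+1)) :
    ∀ i j, i ≤ j → j ≤ n → p i ≤ p j := by
  intro i j hij hjn
  induction j with
  | zero => simp_all
  | succ j ih =>
    rcases Nat.eq_or_lt_of_le hij with rfl | h'
    · exact le_rfl
    · exact le_trans (ih (Nat.lt_succ_iff.mp h') (le_trans (Nat.le_succ j) hjn))
        (le_of_lt (h j (Nat.lt_of_lt_of_le (Nat.lt_succ_self j) hjn)))

lemma chain_strict {p : ℕ → ℝ} {n : ℕ} (h : ∀ j < n, p j < p (j+1)) :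
    ∀ i j, i < j → j ≤ n → p i < p j := by
  intro i j hij hjn
  have h1 : p (i+1) ≤ p j := chain_mono h _ _ hij hjn
  exact lt_of_lt_of_le (h i (lt_of_lt_of_le hij hjn)) h1

variable {a b : ℝ}

lemma pts_mem (P : TaggedPartition a b) {j : ℕ} (hj : j ≤ P.n) :
    P.pts j ∈ Set.Icc a b := by
  constructor
  · have := chain_mono P.pts_mono 0 j (Nat.zero_le _) hj
    rwa [P.pts_zero] at this
  · have := chain_mono P.pts_mono j P.n hj le_rfl
    rwa [P.pts_last] at this

lemma tag_mem' (P : TaggedPartition a b) {j : ℕ} (hj : j < P.n) :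
    P.tag j ∈ Set.Icc a b := by
  obtain ⟨h1, h2⟩ := P.tag_mem j hj
  exact ⟨le_trans (pts_mem P hj.le).1 h1,
    le_trans h2 (pts_mem P hj).2⟩

end Stmt18
namespace Stmt18

variable {a b : ℝ}

lemma var_sum (g : ℝ → ℝ) (hg : BoundedVariationOn g (Set.Icc a b)) {u : ℕ → ℝ}
    (hu : Monotone u) (hmem : ∀ i, u i ∈ Set.Icc a b) (N : ℕ) :
    ∑ i ∈ Finset.range N, |g (u (i+1)) - g (u i)| ≤ var g a b := by
  have h1 := eVariationOn.sum_le (f := g) (n := N) hu hmem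
  have h2 := ENNReal.toReal_mono hg h1
  rw [ENNReal.toReal_sum (fun i _ => edist_ne_top _ _)] at h2
  have h3 : ∀ i ∈ Finset.range N, (edist (g (u (i+1))) (g (u i))).toReal
      = |g (u (i+1)) - g (u i)| := by
    intro i _
    rw [← dist_edist, Real.dist_eq]
  rw [Finset.sum_congr rfl h3] at h2
  exact h2

/-- pick a point in `Ioo t v` where `g` is close to its right limit at `t`. -/
lemma pick_right (g gr : ℝ → ℝ)
    (hgr : ∀ t ∈ Set.Ico a b, Filter.Tendsto g (nhdsWithin t (Set.Ioc t b)) (nhds (gr t)))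
    {t v : ℝ} (ht : t ∈ Set.Ico a b) (htv : t < v) (hvb : v ≤ b) {ε : ℝ} (hε : 0 < ε) :
    ∃ s ∈ Set.Ioo t v, |g s - gr t| < ε := by
  have hne : (nhdsWithin t (Set.Ioc t b)).NeBot := by
    apply mem_closure_iff_nhdsWithin_neBot.mp
    rw [closure_Ioc (ne_of_lt ht.2)]
    exact ⟨le_refl t, le_of_lt ht.2⟩
  have hU : {s | |g s - gr t| < ε} ∈ nhdsWithin t (Set.Ioc t b) := by
    have := Metric.tendsto_nhds.mp (hgr t ht) ε hε
    simp only [Real.dist_eq] at this; exact this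
  have hIoo : Set.Ioo t v ∈ nhdsWithin t (Set.Ioc t b) := by
    apply mem_nhdsWithin.mpr
    refine ⟨Set.Iio v, isOpen_Iio, htv, ?_⟩
    rintro x ⟨hx1, hx2, hx3⟩
    exact ⟨hx2, hx1⟩
  obtain ⟨s, hs⟩ := Filter.nonempty_of_mem (Filter.inter_mem hIoo hU)
  exact ⟨s, hs.1, hs.2⟩

/-- pick a point in `Ioo w v` where `g` is close to its left limit at `v`. -/
lemma pick_left (g gl : ℝ → ℝ)
    (hgl : ∀ t ∈ Set.Ioc a b, Filter.Tendsto g (nhdsWithin t (Set.Ico a t)) (nhds (gl t)))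
    {w v : ℝ} (hv : v ∈ Set.Ioc a b) (hwv : w < v) (haw : a ≤ w) {ε : ℝ} (hε : 0 < ε) :
    ∃ s ∈ Set.Ioo w v, |g s - gl v| < ε := by
  have hne : (nhdsWithin v (Set.Ico a v)).NeBot := by
    apply mem_closure_iff_nhdsWithin_neBot.mp
    rw [closure_Ico hv.1.ne]
    exact ⟨le_of_lt hv.1, le_refl v⟩
  have hU : {s | |g s - gl v| < ε} ∈ nhdsWithin v (Set.Ico a v) := by
    have := Metric.tendsto_nhds.mp (hgl v hv) ε hε
    simp only [Real.dist_eq] at this; exact this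
  have hIoo : Set.Ioo w v ∈ nhdsWithin v (Set.Ico a v) := by
    apply mem_nhdsWithin.mpr
    refine ⟨Set.Ioi w, isOpen_Ioi, hwv, ?_⟩
    rintro x ⟨hx1, hx2, hx3⟩
    exact ⟨hx1, hx3⟩
  obtain ⟨s, hs⟩ := Filter.nonempty_of_mem (Filter.inter_mem hIoo hU)
  exact ⟨s, hs.1, hs.2⟩

lemma sum_range_three_mul (F : ℕ → ℝ) (n : ℕ) :
    ∑ i ∈ Finset.range (3*n), F i
      = ∑ j ∈ Finset.range n, (F (3*j) + F (3*j+1) + F (3*j+2)) := by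
  induction n with
  | zero => simp
  | succ n ih =>
    have h3 : 3*(n+1) = (3*n) + 1 + 1 + 1 := by ring
    rw [h3, Finset.sum_range_succ, Finset.sum_range_succ, Finset.sum_range_succ, ih,
      Finset.sum_range_succ]
    ring

end Stmt18
namespace Stmt18

variable {a b : ℝ}

lemma young_weights (g gl gr : ℝ → ℝ) (hg : BoundedVariationOn g (Set.Icc a b))
    (hgl : ∀ t ∈ Set.Ioc a b, Filter.Tendsto g (nhdsWithin t (Set.Ico a t)) (nhds (gl t)))
    (hgr : ∀ t ∈ Set.Ico a b, Filter.Tendsto g (nhdsWithin t (Set.Ioc t b)) (nhds (gr t)))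
    (P : TaggedPartition a b) :
    ∑ j ∈ Finset.range P.n,
      (|gr (P.pts j) - g (P.pts j)| + |gl (P.pts (j+1)) - gr (P.pts j)|
        + |g (P.pts (j+1)) - gl (P.pts (j+1))|) ≤ var g a b := by
  apply le_of_forall_pos_le_add
  intro ε hε
  set n := P.n with hn
  set t := P.pts with ht
  have hnpos : 0 < n := P.n_pos
  set ε' : ℝ := ε / (4*n) with hε'
  have hε'pos : 0 < ε' := by positivity
  have hab : a ≤ b := by
    have := chain_strict P.pts_mono 0 n hnpos le_rfl
    rw [P.pts_zero, P.pts_last] at this; exact this.le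
  -- choose intermediate points
  have hex : ∀ j, ∃ s u : ℝ, j < n → (t j < s ∧ s < u ∧ u < t (j+1)
      ∧ |g s - gr (t j)| < ε' ∧ |g u - gl (t (j+1))| < ε') := by
    intro j
    by_cases hj : j < n
    · have htj : t j ∈ Set.Ico a b := by
        refine ⟨(pts_mem P hj.le).1, ?_⟩
        have := chain_strict P.pts_mono j n hj le_rfl
        rwa [P.pts_last] at this
      have htj1 : t (j+1) ∈ Set.Ioc a b := by
        refine ⟨?_, (pts_mem P hj).2⟩
        have := chain_strict P.pts_mono 0 (j+1) (Nat.succ_pos j) hj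
        rwa [P.pts_zero] at this
      obtain ⟨s, hs, hgs⟩ := pick_right g gr hgr htj (P.pts_mono j hj) (pts_mem P hj).2 hε'pos
      obtain ⟨u, hu, hgu⟩ := pick_left g gl hgl htj1 hs.2 (le_trans htj.1 hs.1.le) hε'pos
      exact ⟨s, u, fun _ => ⟨hs.1, hu.1, hu.2, hgs, hgu⟩⟩
    · exact ⟨0, 0, fun h => absurd h hj⟩
  choose sf uf hprop using hex
  -- the interleaved chain
  set w : ℕ → ℝ := fun i => if i < 3*n then
      (if i % 3 = 0 then t (i/3) else if i % 3 = 1 then sf (i/3) else uf (i/3)) else b with hw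
  have hw0 : ∀ j < n, w (3*j) = t j := by
    intro j hj
    have e1 : 3*j < 3*n := by omega
    have e2 : (3*j) % 3 = 0 := by omega
    have e3 : (3*j) / 3 = j := by omega
    simp [hw, e1, e2, e3]
  have hw1 : ∀ j < n, w (3*j+1) = sf j := by
    intro j hj
    have e1 : 3*j+1 < 3*n := by omega
    have e2 : (3*j+1) % 3 = 1 := by omega
    have e3 : (3*j+1) / 3 = j := by omega
    simp [hw, e1, e2, e3]
  have hw2 : ∀ j < n, w (3*j+2) = uf j := by
    intro j hj
    have e1 : 3*j+2 < 3*n := by omega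
    have e2 : (3*j+2) % 3 = 2 := by omega
    have e3 : (3*j+2) / 3 = j := by omega
    simp [hw, e1, e2, e3]
  have hw3 : ∀ j < n, w (3*j+3) = t (j+1) := by
    intro j hj
    by_cases hj1 : j+1 < n
    · have e1 : 3*j+3 < 3*n := by omega
      have e2 : (3*j+3) % 3 = 0 := by omega
      have e3 : (3*j+3) / 3 = j+1 := by omega
      simp [hw, e1, e2, e3]
    · have hj1' : j + 1 = n := by omega
      have e1 : ¬ (3*j+3 < 3*n) := by omega
      simp only [hw, if_neg e1]
      rw [hj1', ht, P.pts_last]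
  have hwmono : Monotone w := by
    apply monotone_nat_of_le_succ
    intro i
    by_cases hi : i < 3*n
    · set j := i / 3 with hj
      have hjn : j < n := by omega
      obtain ⟨h1, h2, h3, _, _⟩ := hprop j hjn
      have hr : i % 3 = 0 ∨ i % 3 = 1 ∨ i % 3 = 2 := by omega
      rcases hr with hr | hr | hr
      · have hi' : i = 3*j := by omega
        rw [hi', hw0 j hjn, show 3*j+1 = 3*j+1 from rfl, hw1 j hjn]
        exact h1.le
      · have hi' : i = 3*j+1 := by omega
        rw [hi', show (3*j+1)+1 = 3*j+2 by omega, hw1 j hjn, hw2 j hjn]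
        exact h2.le
      · have hi' : i = 3*j+2 := by omega
        rw [hi', hw2 j hjn, show (3*j+2)+1 = 3*j+3 by omega, hw3 j hjn]
        exact h3.le
    · have e1 : ¬ (i + 1 < 3*n) := by omega
      simp only [hw, if_neg hi, if_neg e1]
      exact le_rfl
  have hwmem : ∀ i, w i ∈ Set.Icc a b := by
    intro i
    by_cases hi : i < 3*n
    · set j := i / 3 with hjdef
      have hjn : j < n := by omega
      obtain ⟨h1, h2, h3, _, _⟩ := hprop j hjn
      have haj : a ≤ t j := (pts_mem P hjn.le).1
      have hbj : t (j+1) ≤ b := (pts_mem P hjn).2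
      have hr : i % 3 = 0 ∨ i % 3 = 1 ∨ i % 3 = 2 := by omega
      rcases hr with hr | hr | hr
      · rw [show i = 3*j by omega, hw0 j hjn]; exact pts_mem P hjn.le
      · rw [show i = 3*j+1 by omega, hw1 j hjn]
        exact ⟨le_trans haj h1.le, le_trans (le_trans h2.le h3.le) hbj⟩
      · rw [show i = 3*j+2 by omega, hw2 j hjn]
        exact ⟨le_trans haj (le_trans h1.le h2.le), le_trans h3.le hbj⟩
    · simp only [hw, if_neg hi]
      exact ⟨hab, le_rfl⟩
  have hvar := var_sum (a := a) (b := b) g hg hwmono hwmem (3*n)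
  set F : ℕ → ℝ := fun i => |g (w (i+1)) - g (w i)| with hF
  have hgroup : ∀ j < n,
      |gr (t j) - g (t j)| + |gl (t (j+1)) - gr (t j)| + |g (t (j+1)) - gl (t (j+1))|
        ≤ (F (3*j) + F (3*j+1) + F (3*j+2)) + 4*ε' := by
    intro j hj
    obtain ⟨h1, h2, h3, h4, h5⟩ := hprop j hj
    have e0 : F (3*j) = |g (sf j) - g (t j)| := by
      simp only [hF]; rw [show 3*j+1 = 3*j+1 from rfl, hw1 j hj, hw0 j hj]
    have e1 : F (3*j+1) = |g (uf j) - g (sf j)| := by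
      simp only [hF]; rw [show (3*j+1)+1 = 3*j+2 by omega, hw2 j hj, hw1 j hj]
    have e2 : F (3*j+2) = |g (t (j+1)) - g (uf j)| := by
      simp only [hF]; rw [show (3*j+2)+1 = 3*j+3 by omega, hw3 j hj, hw2 j hj]
    rw [e0, e1, e2]
    have i1 : |gr (t j) - g (t j)| ≤ |gr (t j) - g (sf j)| + |g (sf j) - g (t j)| :=
      abs_sub_le _ _ _
    have i2 : |gl (t (j+1)) - gr (t j)| ≤ |gl (t (j+1)) - g (uf j)| + |g (uf j) - g (sf j)|
        + |g (sf j) - gr (t j)| := by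
      calc |gl (t (j+1)) - gr (t j)| ≤ |gl (t (j+1)) - g (sf j)| + |g (sf j) - gr (t j)| :=
            abs_sub_le _ _ _
        _ ≤ (|gl (t (j+1)) - g (uf j)| + |g (uf j) - g (sf j)|) + |g (sf j) - gr (t j)| := by
            have := abs_sub_le (gl (t (j+1))) (g (uf j)) (g (sf j))
            linarith
    have i3 : |g (t (j+1)) - gl (t (j+1))| ≤ |g (t (j+1)) - g (uf j)| + |g (uf j) - gl (t (j+1))| :=
      abs_sub_le _ _ _
    have c1 : |gr (t j) - g (sf j)| < ε' := by rw [abs_sub_comm]; exact h4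
    have c2 : |g (sf j) - gr (t j)| < ε' := h4
    have c3 : |gl (t (j+1)) - g (uf j)| < ε' := by rw [abs_sub_comm]; exact h5
    have c4 : |g (uf j) - gl (t (j+1))| < ε' := h5
    linarith
  calc ∑ j ∈ Finset.range n, (|gr (t j) - g (t j)| + |gl (t (j+1)) - gr (t j)|
        + |g (t (j+1)) - gl (t (j+1))|)
      ≤ ∑ j ∈ Finset.range n, ((F (3*j) + F (3*j+1) + F (3*j+2)) + 4*ε') := by
        apply Finset.sum_le_sum
        intro j hj
        exact hgroup j (Finset.mem_range.mp hj)
    _ = ∑ j ∈ Finset.range n, (F (3*j) + F (3*j+1) + F (3*j+2)) + n * (4*ε') := by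
        rw [Finset.sum_add_distrib, Finset.sum_const, Finset.card_range, nsmul_eq_mul]
    _ = ∑ i ∈ Finset.range (3*n), F i + n * (4*ε') := by rw [sum_range_three_mul]
    _ ≤ var g a b + ε := by
        have hn0 : (n:ℝ) ≠ 0 := Nat.cast_ne_zero.mpr hnpos.ne'
        have : (n : ℝ) * (4*ε') = ε := by
          rw [hε']
          field_simp
        rw [this]
        linarith [hvar]

end Stmt18
namespace Stmt18

variable {a b : ℝ}

lemma pts_var (g : ℝ → ℝ) (hg : BoundedVariationOn g (Set.Icc a b)) (P : TaggedPartition a b) :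
    ∑ j ∈ Finset.range P.n, |g (P.pts (j+1)) - g (P.pts j)| ≤ var g a b := by
  set u : ℕ → ℝ := fun i => P.pts (min i P.n) with hu
  have humono : Monotone u := by
    intro i j hij
    exact chain_mono P.pts_mono _ _ (min_le_min_right _ hij) (min_le_right _ _)
  have humem : ∀ i, u i ∈ Set.Icc a b := fun i => pts_mem P (min_le_right _ _)
  have := var_sum (a := a) (b := b) g hg humono humem P.n
  have heq : ∀ j ∈ Finset.range P.n, |g (u (j+1)) - g (u j)| = |g (P.pts (j+1)) - g (P.pts j)| := by
    intro j hj
    have hj' := Finset.mem_range.mp hj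
    simp only [hu]
    rw [min_eq_left hj'.le, min_eq_left hj']
  rwa [Finset.sum_congr rfl heq] at this

lemma RS_diff (f1 f2 g : ℝ → ℝ) (hg : BoundedVariationOn g (Set.Icc a b))
    (P : TaggedPartition a b) {ε : ℝ} (hε : 0 ≤ ε)
    (hd : ∀ x ∈ Set.Icc a b, |f1 x - f2 x| ≤ ε) :
    |RS f1 g P - RS f2 g P| ≤ ε * var g a b := by
  have h1 : RS f1 g P - RS f2 g P
      = ∑ j ∈ Finset.range P.n, (f1 (P.tag j) - f2 (P.tag j)) * (g (P.pts (j+1)) - g (P.pts j)) := by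
    rw [RS, RS, ← Finset.sum_sub_distrib]
    congr 1; ext j; ring
  rw [h1]
  calc |∑ j ∈ Finset.range P.n, (f1 (P.tag j) - f2 (P.tag j)) * (g (P.pts (j+1)) - g (P.pts j))|
      ≤ ∑ j ∈ Finset.range P.n, |(f1 (P.tag j) - f2 (P.tag j)) * (g (P.pts (j+1)) - g (P.pts j))| :=
        Finset.abs_sum_le_sum_abs _ _
    _ ≤ ∑ j ∈ Finset.range P.n, ε * |g (P.pts (j+1)) - g (P.pts j)| := by
        apply Finset.sum_le_sum
        intro j hj
        rw [abs_mul]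
        exact mul_le_mul_of_nonneg_right (hd _ (tag_mem' P (Finset.mem_range.mp hj))) (abs_nonneg _)
    _ = ε * ∑ j ∈ Finset.range P.n, |g (P.pts (j+1)) - g (P.pts j)| := by
        rw [Finset.mul_sum]
    _ ≤ ε * var g a b := mul_le_mul_of_nonneg_left (pts_var g hg P) hε

lemma YS_diff (f1 f2 gl gr g : ℝ → ℝ) (hg : BoundedVariationOn g (Set.Icc a b))
    (hgl : ∀ t ∈ Set.Ioc a b, Filter.Tendsto g (nhdsWithin t (Set.Ico a t)) (nhds (gl t)))
    (hgr : ∀ t ∈ Set.Ico a b, Filter.Tendsto g (nhdsWithin t (Set.Ioc t b)) (nhds (gr t)))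
    (P : TaggedPartition a b) {ε : ℝ} (hε : 0 ≤ ε)
    (hd : ∀ x ∈ Set.Icc a b, |f1 x - f2 x| ≤ ε) :
    |YS f1 gl gr g P - YS f2 gl gr g P| ≤ ε * var g a b := by
  have h1 : YS f1 gl gr g P - YS f2 gl gr g P
      = ∑ j ∈ Finset.range P.n,
        ((f1 (P.pts j) - f2 (P.pts j)) * (gr (P.pts j) - g (P.pts j))
          + (f1 (P.tag j) - f2 (P.tag j)) * (gl (P.pts (j+1)) - gr (P.pts j))
          + (f1 (P.pts (j+1)) - f2 (P.pts (j+1))) * (g (P.pts (j+1)) - gl (P.pts (j+1)))) := by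
    rw [YS, YS, ← Finset.sum_sub_distrib]
    congr 1; ext j; ring
  rw [h1]
  calc |∑ j ∈ Finset.range P.n, _| ≤ ∑ j ∈ Finset.range P.n,
        |(f1 (P.pts j) - f2 (P.pts j)) * (gr (P.pts j) - g (P.pts j))
          + (f1 (P.tag j) - f2 (P.tag j)) * (gl (P.pts (j+1)) - gr (P.pts j))
          + (f1 (P.pts (j+1)) - f2 (P.pts (j+1))) * (g (P.pts (j+1)) - gl (P.pts (j+1)))| :=
        Finset.abs_sum_le_sum_abs _ _
    _ ≤ ∑ j ∈ Finset.range P.n, ε * (|gr (P.pts j) - g (P.pts j)|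
          + |gl (P.pts (j+1)) - gr (P.pts j)| + |g (P.pts (j+1)) - gl (P.pts (j+1))|) := by
        apply Finset.sum_le_sum
        intro j hj
        have hj' := Finset.mem_range.mp hj
        have b1 : |(f1 (P.pts j) - f2 (P.pts j)) * (gr (P.pts j) - g (P.pts j))|
            ≤ ε * |gr (P.pts j) - g (P.pts j)| := by
          rw [abs_mul]
          exact mul_le_mul_of_nonneg_right (hd _ (pts_mem P hj'.le)) (abs_nonneg _)
        have b2 : |(f1 (P.tag j) - f2 (P.tag j)) * (gl (P.pts (j+1)) - gr (P.pts j))|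
            ≤ ε * |gl (P.pts (j+1)) - gr (P.pts j)| := by
          rw [abs_mul]
          exact mul_le_mul_of_nonneg_right (hd _ (tag_mem' P hj')) (abs_nonneg _)
        have b3 : |(f1 (P.pts (j+1)) - f2 (P.pts (j+1))) * (g (P.pts (j+1)) - gl (P.pts (j+1)))|
            ≤ ε * |g (P.pts (j+1)) - gl (P.pts (j+1))| := by
          rw [abs_mul]
          exact mul_le_mul_of_nonneg_right (hd _ (pts_mem P hj')) (abs_nonneg _)
        calc |_ + _ + _| ≤ _ := abs_add_three _ _ _
          _ ≤ ε * |gr (P.pts j) - g (P.pts j)| + ε * |gl (P.pts (j+1)) - gr (P.pts j)|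
              + ε * |g (P.pts (j+1)) - gl (P.pts (j+1))| := by
            exact add_le_add (add_le_add b1 b2) b3
          _ = ε * (|gr (P.pts j) - g (P.pts j)| + |gl (P.pts (j+1)) - gr (P.pts j)|
              + |g (P.pts (j+1)) - gl (P.pts (j+1))|) := by ring
    _ = ε * ∑ j ∈ Finset.range P.n, (|gr (P.pts j) - g (P.pts j)|
          + |gl (P.pts (j+1)) - gr (P.pts j)| + |g (P.pts (j+1)) - gl (P.pts (j+1))|) := by
        rw [Finset.mul_sum]
    _ ≤ ε * var g a b :=
        mul_le_mul_of_nonneg_left (young_weights g gl gr hg hgl hgr P) hε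

end Stmt18
namespace Stmt18

variable {a b : ℝ}

/-- data of a step function on `[a,b]` -/
structure StepData (a b : ℝ) where
  m : ℕ
  σ : ℕ → ℝ
  φ : ℝ → ℝ
  m_pos : 0 < m
  σ0 : σ 0 = a
  σm : σ m = b
  mono : ∀ k < m, σ k < σ (k+1)
  const : ∀ k < m, ∀ x ∈ Set.Ioo (σ k) (σ (k+1)), ∀ y ∈ Set.Ioo (σ k) (σ (k+1)), φ x = φ y

namespace StepData

variable (S : StepData a b)

/-- value on the `k`-th open piece -/
noncomputable def c (k : ℕ) : ℝ := S.φ ((S.σ k + S.σ (k+1))/2)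

lemma phi_eq {k : ℕ} (hk : k < S.m) {x : ℝ} (hx : x ∈ Set.Ioo (S.σ k) (S.σ (k+1))) :
    S.φ x = S.c k := by
  have hmid : (S.σ k + S.σ (k+1))/2 ∈ Set.Ioo (S.σ k) (S.σ (k+1)) := by
    constructor <;> [linarith [S.mono k hk, hx.1, hx.2]; linarith [S.mono k hk]]
  exact S.const k hk x hx _ hmid

lemma σ_mem {k : ℕ} (hk : k ≤ S.m) : S.σ k ∈ Set.Icc a b := by
  constructor
  · have := chain_mono S.mono 0 k (Nat.zero_le _) hk
    rwa [S.σ0] at this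
  · have := chain_mono S.mono k S.m hk le_rfl
    rwa [S.σm] at this

variable (gl gr g : ℝ → ℝ)

/-- full Young contribution of the `k`-th piece -/
noncomputable def A (k : ℕ) : ℝ :=
  S.φ (S.σ k) * (gr (S.σ k) - g (S.σ k)) + S.c k * (gl (S.σ (k+1)) - gr (S.σ k))
    + S.φ (S.σ (k+1)) * (g (S.σ (k+1)) - gl (S.σ (k+1)))

noncomputable def ψ (k : ℕ) (x : ℝ) : ℝ :=
  if x ≤ S.σ k then 0
  else if x < S.σ (k+1) then
    S.φ (S.σ k) * (gr (S.σ k) - g (S.σ k)) + S.c k * (g x - gr (S.σ k))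
  else S.A gl gr g k

/-- the Young "primitive" -/
noncomputable def hfun (x : ℝ) : ℝ := ∑ k ∈ Finset.range S.m, S.ψ gl gr g k x

/-- the value of the Young integral of the step function -/
noncomputable def Yval : ℝ := ∑ k ∈ Finset.range S.m, S.A gl gr g k

lemma ψ_low {k : ℕ} {x : ℝ} (h : x ≤ S.σ k) : S.ψ gl gr g k x = 0 := by
  rw [ψ, if_pos h]

lemma ψ_high {k : ℕ} (hk : k < S.m) {x : ℝ} (h : S.σ (k+1) ≤ x) :
    S.ψ gl gr g k x = S.A gl gr g k := by
  have h1 : ¬ x ≤ S.σ k := not_le.mpr (lt_of_lt_of_le (S.mono k hk) h)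
  rw [ψ, if_neg h1, if_neg (not_lt.mpr h)]

lemma hfun_a : S.hfun gl gr g a = 0 := by
  rw [hfun]
  apply Finset.sum_eq_zero
  intro k hk
  apply ψ_low
  have := chain_mono S.mono 0 k (Nat.zero_le _) (Finset.mem_range.mp hk).le
  rwa [S.σ0] at this

lemma hfun_b : S.hfun gl gr g b = S.Yval gl gr g := by
  rw [hfun, Yval]
  apply Finset.sum_congr rfl
  intro k hk
  have hk' := Finset.mem_range.mp hk
  apply ψ_high _ _ _ _ hk'
  have := chain_mono S.mono (k+1) S.m hk' le_rfl
  rwa [S.σm] at this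

/-- key local computation of increments of `hfun` within one piece -/
lemma hloc {k : ℕ} (hk : k < S.m) {u v : ℝ} (hu : S.σ k ≤ u) (huv : u < v)
    (hv : v ≤ S.σ (k+1)) :
    S.hfun gl gr g v - S.hfun gl gr g u
      = (if u = S.σ k then
          S.φ (S.σ k) * (gr (S.σ k) - g (S.σ k))
            + S.c k * ((if v = S.σ (k+1) then gl (S.σ (k+1)) else g v) - gr (S.σ k))
        else S.c k * ((if v = S.σ (k+1) then gl (S.σ (k+1)) else g v) - g u))
        + (if v = S.σ (k+1) then S.φ (S.σ (k+1)) * (g (S.σ (k+1)) - gl (S.σ (k+1))) else 0) := by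
  have hsum : S.hfun gl gr g v - S.hfun gl gr g u
      = ∑ k' ∈ Finset.range S.m, (S.ψ gl gr g k' v - S.ψ gl gr g k' u) := by
    rw [hfun, hfun, ← Finset.sum_sub_distrib]
  rw [hsum, Finset.sum_eq_single_of_mem k (Finset.mem_range.mpr hk)]
  · -- the main term
    have hψu : S.ψ gl gr g k u = (if u = S.σ k then 0
        else S.φ (S.σ k) * (gr (S.σ k) - g (S.σ k)) + S.c k * (g u - gr (S.σ k))) := by
      by_cases h : u = S.σ k
      · rw [if_pos h]; exact S.ψ_low gl gr g h.le
      · have h1 : ¬ u ≤ S.σ k := by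
          intro hle
          exact h (le_antisymm hle hu)
        rw [if_neg h, ψ, if_neg h1, if_pos (lt_of_lt_of_le huv hv)]
    have hψv : S.ψ gl gr g k v = (if v = S.σ (k+1) then S.A gl gr g k
        else S.φ (S.σ k) * (gr (S.σ k) - g (S.σ k)) + S.c k * (g v - gr (S.σ k))) := by
      by_cases h : v = S.σ (k+1)
      · rw [if_pos h]; exact S.ψ_high gl gr g hk h.ge
      · have h1 : ¬ v ≤ S.σ k := not_le.mpr (lt_of_le_of_lt hu huv)
        rw [if_neg h, ψ, if_neg h1, if_pos (lt_of_le_of_ne hv h)]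
    rw [hψu, hψv]
    by_cases h2 : u = S.σ k <;> by_cases h3 : v = S.σ (k+1) <;>
      simp only [if_pos, if_neg, h2, h3, if_true, if_false, A] <;> ring
  · -- other terms vanish
    intro k' hk' hne
    have hk'' := Finset.mem_range.mp hk'
    rcases lt_or_gt_of_ne hne with hlt | hgt
    · -- k' < k : both values are `A k'`
      have h1 : S.σ (k'+1) ≤ u := le_trans (le_trans
        (chain_mono S.mono (k'+1) k hlt hk.le) le_rfl) hu
      rw [S.ψ_high gl gr g hk'' h1, S.ψ_high gl gr g hk'' (le_trans h1 huv.le)]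
      ring
    · -- k' > k : both values are `0`
      have h1 : v ≤ S.σ k' := le_trans hv (chain_mono S.mono (k+1) k' hgt hk''.le)
      rw [S.ψ_low gl gr g h1, S.ψ_low gl gr g (le_trans huv.le h1)]
      ring

end StepData

/-- the division points of a step datum, as a finset -/
noncomputable def StepData.D (S : StepData a b) : Finset ℝ :=
  (Finset.range (S.m+1)).image S.σ

lemma StepData.D_subset (S : StepData a b) : ↑S.D ⊆ Set.Icc a b := by
  intro x hx
  simp only [StepData.D, Finset.coe_image, Set.mem_image, Finset.coe_range] at hx
  obtain ⟨k, hk, rfl⟩ := hx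
  exact S.σ_mem (by simpa using Nat.lt_succ_iff.mp (by simpa using hk))

/-- locating a subinterval of a refining partition inside a piece -/
lemma locate (S : StepData a b) (P : TaggedPartition a b) (href : Refines P S.D)
    {j : ℕ} (hj : j < P.n) :
    ∃ k < S.m, S.σ k ≤ P.pts j ∧ P.pts (j+1) ≤ S.σ (k+1) := by
  classical
  set Q : ℕ → Prop := fun k => S.σ k ≤ P.pts j with hQ
  have hQ0 : Q 0 := by
    simp only [hQ, S.σ0]
    exact (pts_mem P hj.le).1
  set k := Nat.findGreatest Q S.m with hkdef
  have hkspec : Q k := Nat.findGreatest_spec (Nat.zero_le _) hQ0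
  have hkle : k ≤ S.m := Nat.findGreatest_le _
  have htjb : P.pts j < b := by
    have := chain_strict P.pts_mono j P.n hj le_rfl
    rwa [P.pts_last] at this
  have hkm : k < S.m := by
    rcases Nat.lt_or_ge k S.m with h | h
    · exact h
    · exfalso
      have : k = S.m := le_antisymm hkle h
      rw [this] at hkspec
      simp only [hQ, S.σm] at hkspec
      exact absurd hkspec (not_le.mpr htjb)
  refine ⟨k, hkm, hkspec, ?_⟩
  have hgt : P.pts j < S.σ (k+1) := by
    have := Nat.findGreatest_is_greatest (Nat.lt_succ_self (Nat.findGreatest Q S.m))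
      (Nat.succ_le_of_lt (hkdef ▸ hkm))
    simp only [hQ] at this
    exact not_le.mp this
  -- σ (k+1) is a partition point
  have hmem : S.σ (k+1) ∈ S.D := by
    simp only [StepData.D, Finset.mem_image, Finset.mem_range]
    exact ⟨k+1, by omega, rfl⟩
  obtain ⟨i, hi, hieq⟩ := href _ hmem
  have hij : j < i := by
    by_contra hcon
    push_neg at hcon
    have : P.pts i ≤ P.pts j := chain_mono P.pts_mono i j hcon hj.le
    rw [hieq] at this
    exact absurd this (not_le.mpr hgt)
  calc P.pts (j+1) ≤ P.pts i := chain_mono P.pts_mono (j+1) i hij hi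
    _ = S.σ (k+1) := hieq

/-- a refining partition with interior tags has Young sum exactly `Yval`. -/
lemma young_exact (S : StepData a b) (gl gr g : ℝ → ℝ) (P : TaggedPartition a b)
    (href : Refines P S.D) (hint : InteriorTags P) :
    YS S.φ gl gr g P = S.Yval gl gr g := by
  have hterm : ∀ j < P.n,
      S.φ (P.pts j) * (gr (P.pts j) - g (P.pts j))
        + S.φ (P.tag j) * (gl (P.pts (j+1)) - gr (P.pts j))
        + S.φ (P.pts (j+1)) * (g (P.pts (j+1)) - gl (P.pts (j+1)))
      = S.hfun gl gr g (P.pts (j+1)) - S.hfun gl gr g (P.pts j) := by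
    intro j hj
    obtain ⟨k, hk, hku, hkv⟩ := locate S P href hj
    obtain ⟨hξ1, hξ2⟩ := hint j hj
    have hφξ : S.φ (P.tag j) = S.c k :=
      S.phi_eq hk ⟨lt_of_le_of_lt hku hξ1, lt_of_lt_of_le hξ2 hkv⟩
    have huv : P.pts j < P.pts (j+1) := P.pts_mono j hj
    rw [S.hloc gl gr g hk hku huv hkv]
    by_cases h2 : P.pts j = S.σ k <;> by_cases h3 : P.pts (j+1) = S.σ (k+1)
    · simp only [if_pos h2, if_pos h3, h2, h3, hφξ, eq_self_iff_true, ite_true, ite_false]; try ring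
    · have hφv : S.φ (P.pts (j+1)) = S.c k := S.phi_eq hk
        ⟨lt_of_le_of_lt hku huv, lt_of_le_of_ne hkv h3⟩
      simp only [if_pos h2, if_neg h3, h2, hφξ, hφv, eq_self_iff_true, ite_true, ite_false]; try ring
    · have hφu : S.φ (P.pts j) = S.c k := S.phi_eq hk
        ⟨lt_of_le_of_ne hku (Ne.symm h2), lt_of_lt_of_le huv hkv⟩
      simp only [if_neg h2, if_pos h3, h3, hφξ, hφu, eq_self_iff_true, ite_true, ite_false]; try ring
    · have hφv : S.φ (P.pts (j+1)) = S.c k := S.phi_eq hk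
        ⟨lt_of_le_of_lt hku huv, lt_of_le_of_ne hkv h3⟩
      have hφu : S.φ (P.pts j) = S.c k := S.phi_eq hk
        ⟨lt_of_le_of_ne hku (Ne.symm h2), lt_of_lt_of_le huv hkv⟩
      simp only [if_neg h2, if_neg h3, hφξ, hφu, hφv, eq_self_iff_true, ite_true, ite_false]; try ring
  have : YS S.φ gl gr g P
      = ∑ j ∈ Finset.range P.n, (S.hfun gl gr g (P.pts (j+1)) - S.hfun gl gr g (P.pts j)) := by
    rw [YS]
    apply Finset.sum_congr rfl
    intro j hj
    exact hterm j (Finset.mem_range.mp hj)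
  rw [this, Finset.sum_range_sub (fun i => S.hfun gl gr g (P.pts i)), P.pts_last, P.pts_zero,
    S.hfun_b, S.hfun_a]
  ring

end Stmt18
namespace Stmt18

variable {a b : ℝ}

lemma abs_two_prod_le {x1 y1 x2 y2 M e : ℝ} (hx1 : |x1| ≤ 2*M) (hy1 : |y1| ≤ e)
    (hx2 : |x2| ≤ 2*M) (hy2 : |y2| ≤ e) (hM : 0 < M) (he : 0 ≤ e) :
    |x1 * y1 + x2 * y2| ≤ 4*M*e := by
  calc |x1 * y1 + x2 * y2| ≤ |x1 * y1| + |x2 * y2| := abs_add_le _ _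
    _ = |x1| * |y1| + |x2| * |y2| := by rw [abs_mul, abs_mul]
    _ ≤ (2*M) * e + (2*M) * e :=
        add_le_add (mul_le_mul hx1 hy1 (abs_nonneg _) (by positivity))
          (mul_le_mul hx2 hy2 (abs_nonneg _) (by positivity))
    _ = 4*M*e := by ring

lemma ks_step (hab : a < b) (S : StepData a b) (gl gr g : ℝ → ℝ)
    (hgl : ∀ t ∈ Set.Ioc a b, Filter.Tendsto g (nhdsWithin t (Set.Ico a t)) (nhds (gl t)))
    (hgr : ∀ t ∈ Set.Ico a b, Filter.Tendsto g (nhdsWithin t (Set.Ioc t b)) (nhds (gr t)))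
    {ε : ℝ} (hε : 0 < ε) :
    ∃ δ : ℝ → ℝ, (∀ t ∈ Set.Icc a b, 0 < δ t ∧ δ t < 1) ∧
      ∀ P : TaggedPartition a b, IsFine δ P → |RS S.φ g P - S.Yval gl gr g| < ε := by
  classical
  set m := S.m with hm
  set σ := S.σ with hσdef
  -- a bound for the values of φ at nodes and on pieces
  set M : ℝ := 1 + ∑ k ∈ Finset.range (m+1), |S.φ (σ k)| + ∑ k ∈ Finset.range m, |S.c k|
    with hM
  have hM1 : 1 ≤ M := by
    have h1 : 0 ≤ ∑ k ∈ Finset.range (m+1), |S.φ (σ k)| :=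
      Finset.sum_nonneg fun _ _ => abs_nonneg _
    have h2 : 0 ≤ ∑ k ∈ Finset.range m, |S.c k| :=
      Finset.sum_nonneg fun _ _ => abs_nonneg _
    linarith
  have hMpos : 0 < M := lt_of_lt_of_le one_pos hM1
  have hφM : ∀ k ≤ m, |S.φ (σ k)| ≤ M := by
    intro k hk
    have h1 : |S.φ (σ k)| ≤ ∑ k' ∈ Finset.range (m+1), |S.φ (σ k')| :=
      Finset.single_le_sum (f := fun k' => |S.φ (σ k')|) (fun _ _ => abs_nonneg _)
        (Finset.mem_range.mpr (Nat.lt_succ_of_le hk))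
    have h2 : 0 ≤ ∑ k ∈ Finset.range m, |S.c k| :=
      Finset.sum_nonneg fun _ _ => abs_nonneg _
    linarith
  have hcM : ∀ k < m, |S.c k| ≤ M := by
    intro k hk
    have h1 : |S.c k| ≤ ∑ k' ∈ Finset.range m, |S.c k'| :=
      Finset.single_le_sum (f := fun k' => |S.c k'|) (fun _ _ => abs_nonneg _)
        (Finset.mem_range.mpr hk)
    have h2 : 0 ≤ ∑ k ∈ Finset.range (m+1), |S.φ (σ k)| :=
      Finset.sum_nonneg fun _ _ => abs_nonneg _
    linarith
  have hdiffM : ∀ k < m, ∀ k' ≤ m, |S.φ (σ k') - S.c k| ≤ 2*M := by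
    intro k hk k' hk'
    calc |S.φ (σ k') - S.c k| ≤ |S.φ (σ k')| + |S.c k| := abs_sub _ _
      _ ≤ M + M := add_le_add (hφM k' hk') (hcM k hk)
      _ = 2*M := by ring
  have hσm' : σ m = b := S.σm
  have hσ0' : σ 0 = a := S.σ0
  set ε' : ℝ := ε / (8*M*(m+1)+1) with hε'
  have hε'pos : 0 < ε' := by positivity
  -- gauges at the division points
  have hR : ∀ k, ∃ d : ℝ, 0 < d ∧ (k < m →
      σ k + d < σ (k+1) ∧ ∀ s, σ k < s → s ≤ σ k + d → s ≤ b → |g s - gr (σ k)| < ε') := by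
    intro k
    by_cases hk : k < m
    · have hmem : σ k ∈ Set.Ico a b := by
        refine ⟨(S.σ_mem hk.le).1, ?_⟩
        have := chain_strict S.mono k m hk le_rfl
        rwa [S.σm] at this
      obtain ⟨dr, hdr, Hr⟩ := Metric.tendsto_nhdsWithin_nhds.mp (hgr _ hmem) ε' hε'pos
      have hgap : 0 < σ (k+1) - σ k := sub_pos.mpr (S.mono k hk)
      refine ⟨min dr (σ (k+1) - σ k) / 2, by positivity, fun _ => ⟨?_, ?_⟩⟩
      · have : min dr (σ (k+1) - σ k) / 2 < σ (k+1) - σ k := by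
          have := min_le_right dr (σ (k+1) - σ k)
          linarith
        linarith
      · intro s hs1 hs2 hs3
        have hd : min dr (σ (k+1) - σ k) / 2 < dr := by
          have := min_le_left dr (σ (k+1) - σ k)
          linarith
        have : dist s (σ k) < dr := by
          rw [Real.dist_eq, abs_of_pos (sub_pos.mpr hs1)]
          linarith
        have := Hr ⟨hs1, hs3⟩ this
        rwa [Real.dist_eq] at this
    · exact ⟨1, one_pos, fun h => absurd h hk⟩
  have hL : ∀ k, ∃ d : ℝ, 0 < d ∧ (0 < k → k ≤ m →
      σ (k-1) < σ k - d ∧ ∀ s, σ k - d ≤ s → s < σ k → a ≤ s → |g s - gl (σ k)| < ε') := by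
    intro k
    by_cases hk : 0 < k ∧ k ≤ m
    · have hmem : σ k ∈ Set.Ioc a b := by
        refine ⟨?_, (S.σ_mem hk.2).2⟩
        have := chain_strict S.mono 0 k hk.1 hk.2
        rwa [S.σ0] at this
      obtain ⟨dl, hdl, Hl⟩ := Metric.tendsto_nhdsWithin_nhds.mp (hgl _ hmem) ε' hε'pos
      have hgap : 0 < σ k - σ (k-1) := by
        have := chain_strict S.mono (k-1) k (by omega) hk.2
        linarith
      refine ⟨min dl (σ k - σ (k-1)) / 2, by positivity, fun _ _ => ⟨?_, ?_⟩⟩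
      · have : min dl (σ k - σ (k-1)) / 2 < σ k - σ (k-1) := by
          have := min_le_right dl (σ k - σ (k-1))
          linarith
        linarith
      · intro s hs1 hs2 hs3
        have hd : min dl (σ k - σ (k-1)) / 2 < dl := by
          have := min_le_left dl (σ k - σ (k-1))
          linarith
        have : dist s (σ k) < dl := by
          rw [Real.dist_eq, abs_of_neg (sub_neg.mpr hs2)]
          linarith
        have := Hl ⟨hs3, hs2⟩ this
        rwa [Real.dist_eq] at this
    · exact ⟨1, one_pos, fun h1 h2 => absurd ⟨h1, h2⟩ hk⟩
  choose dR hdR0 hdRp using hR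
  choose dL hdL0 hdLp using hL
  set d : ℕ → ℝ := fun k => min (dR k) (dL k) with hd
  have hd0 : ∀ k, 0 < d k := fun k => lt_min (hdR0 k) (hdL0 k)
  have hdRight : ∀ k < m, σ k + d k < σ (k+1)
      ∧ ∀ s, σ k < s → s ≤ σ k + d k → s ≤ b → |g s - gr (σ k)| < ε' := by
    intro k hk
    obtain ⟨h1, h2⟩ := hdRp k hk
    exact ⟨lt_of_le_of_lt (by simp [hd, min_le_left]) h1,
      fun s hs1 hs2 hs3 => h2 s hs1 (le_trans hs2 (by simp [hd, min_le_left])) hs3⟩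
  have hdLeft : ∀ k, 0 < k → k ≤ m → σ (k-1) < σ k - d k
      ∧ ∀ s, σ k - d k ≤ s → s < σ k → a ≤ s → |g s - gl (σ k)| < ε' := by
    intro k hk1 hk2
    obtain ⟨h1, h2⟩ := hdLp k hk1 hk2
    have hmin : d k ≤ dL k := min_le_right _ _
    exact ⟨lt_of_lt_of_le h1 (by linarith),
      fun s hs1 hs2 hs3 => h2 s (by linarith) hs2 hs3⟩
  -- index of a division point
  set kof : ℝ → ℕ := fun t => Nat.findGreatest (fun k => σ k = t) m with hkof
  have hkofD : ∀ t ∈ S.D, kof t ≤ m ∧ σ (kof t) = t := by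
    intro t ht
    simp only [StepData.D, Finset.mem_image, Finset.mem_range] at ht
    obtain ⟨k, hk, hkt⟩ := ht
    exact ⟨Nat.findGreatest_le _,
      Nat.findGreatest_spec (P := fun k => σ k = t) (Nat.lt_succ_iff.mp hk) hkt⟩
  -- minimal distance to division points
  have hDne : S.D.Nonempty := ⟨σ 0, by
    simp only [StepData.D, Finset.mem_image, Finset.mem_range]; exact ⟨0, by omega, rfl⟩⟩
  set mind : ℝ → ℝ := fun t => ((S.D.image fun x => |x - t|).min' (hDne.image _)) with hmind
  have hmind_le : ∀ t, ∀ x ∈ S.D, mind t ≤ |x - t| := by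
    intro t x hx
    exact Finset.min'_le _ _ (Finset.mem_image_of_mem _ hx)
  have hmind_pos : ∀ t, t ∉ S.D → 0 < mind t := by
    intro t ht
    obtain ⟨y, hy, hyeq⟩ := Finset.mem_image.mp (Finset.min'_mem (S.D.image fun x => |x - t|)
      (hDne.image _))
    have hpos : 0 < |y - t| := abs_pos.mpr (sub_ne_zero.mpr (fun h => ht (h ▸ hy)))
    have hmt : mind t = |y - t| := by simp only [hmind]; exact hyeq.symm
    rw [hmt]; exact hpos
  set δ : ℝ → ℝ := fun t => if t ∈ S.D then min (d (kof t)) (1/2) else min (mind t / 2) (1/2)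
    with hδ
  have hδpos : ∀ t, 0 < δ t := by
    intro t
    by_cases ht : t ∈ S.D
    · simp only [hδ, if_pos ht]
      exact lt_min (hd0 _) (by norm_num)
    · simp only [hδ, if_neg ht]
      exact lt_min (by linarith [hmind_pos t ht]) (by norm_num)
  refine ⟨δ, fun t _ => ⟨hδpos t, ?_⟩, ?_⟩
  · by_cases ht : t ∈ S.D
    · simp only [hδ, if_pos ht]
      exact lt_of_le_of_lt (min_le_right _ _) (by norm_num)
    · simp only [hδ, if_neg ht]
      exact lt_of_le_of_lt (min_le_right _ _) (by norm_num)
  intro P hP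
  set hf : ℝ → ℝ := S.hfun gl gr g with hhf
  set E : ℕ → ℝ := fun j => S.φ (P.tag j) * (g (P.pts (j+1)) - g (P.pts j))
    - (hf (P.pts (j+1)) - hf (P.pts j)) with hE
  have hRSY : RS S.φ g P - S.Yval gl gr g = ∑ j ∈ Finset.range P.n, E j := by
    have h1 : S.Yval gl gr g = ∑ j ∈ Finset.range P.n, (hf (P.pts (j+1)) - hf (P.pts j)) := by
      rw [Finset.sum_range_sub (fun i => hf (P.pts i)), P.pts_last, P.pts_zero, hhf,
        S.hfun_b, S.hfun_a]
      ring
    rw [RS, h1, ← Finset.sum_sub_distrib]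
  -- per-interval analysis
  have hmain : ∀ j < P.n, (P.tag j ∉ S.D → E j = 0) ∧ |E j| ≤ 4*M*ε' := by
    intro j hj
    set u := P.pts j with hu
    set v := P.pts (j+1) with hv
    set ξ := P.tag j with hξ
    have huv : u < v := P.pts_mono j hj
    obtain ⟨huξ, hξv⟩ := P.tag_mem j hj
    have humem : u ∈ Set.Icc a b := pts_mem P hj.le
    have hvmem : v ∈ Set.Icc a b := pts_mem P hj
    have hsub := hP j hj
    have hfu : ξ - δ ξ ≤ u := (hsub ⟨le_refl u, huv.le⟩).1
    have hfv : v ≤ ξ + δ ξ := (hsub ⟨huv.le, le_refl v⟩).2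
    by_cases hξD : ξ ∈ S.D
    · -- tag is a division point
      constructor
      · intro h; exact absurd hξD h
      obtain ⟨hk0le, hk0eq⟩ := hkofD ξ hξD
      set k0 := kof ξ with hk0
      have hδξ : δ ξ ≤ d k0 := by
        simp only [hδ, if_pos hξD]
        exact min_le_left _ _
      have hfu' : σ k0 - d k0 ≤ u := by rw [hk0eq]; linarith
      have hfv' : v ≤ σ k0 + d k0 := by rw [hk0eq]; linarith
      by_cases hvξ : ξ < v
      · -- the interval sticks out to the right of σ k0
        have hk0m : k0 < m := by
          rcases Nat.lt_or_ge k0 m with h | h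
          · exact h
          · exfalso
            have : k0 = m := le_antisymm hk0le h
            rw [this, hσm'] at hk0eq
            have : v ≤ b := hvmem.2
            rw [hk0eq] at this
            exact absurd hvξ (not_lt.mpr this)
        obtain ⟨hgapR, hestR⟩ := hdRight k0 hk0m
        have hvlt : v < σ (k0+1) := lt_of_le_of_lt hfv' hgapR
        have hgrv : |g v - gr (σ k0)| < ε' := by
          apply hestR v _ hfv' hvmem.2
          rw [hk0eq]; exact hvξ
        by_cases huξ' : u = ξ
        · -- u = σ k0 < v
          have hloc1 := S.hloc gl gr g hk0m (le_of_eq (huξ' ▸ hk0eq)) huv hvlt.le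
          have hsu : u = σ k0 := by rw [huξ', hk0eq]
          have hsv : ¬ v = σ (k0+1) := ne_of_lt hvlt
          rw [if_pos hsu, if_neg hsv, if_neg hsv] at hloc1
          have hξs : ξ = σ k0 := hk0eq.symm
          have hEj : E j = S.φ ξ * (g v - g u) - (S.hfun gl gr g v - S.hfun gl gr g u) := rfl
          have hEe : E j = (S.φ (σ k0) - S.c k0) * (g v - gr (σ k0)) + 0 * 0 := by
            rw [hEj, hloc1, hsu, hξs]
            ring
          rw [hEe]
          apply abs_two_prod_le (hdiffM k0 hk0m k0 hk0m.le) hgrv.le _ _ hMpos hε'pos.le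
          · simpa using (by positivity : (0:ℝ) ≤ 2*M)
          · simpa using hε'pos.le
        · -- u < σ k0 < v
          have huξlt : u < ξ := lt_of_le_of_ne huξ huξ'
          have hk0pos : 0 < k0 := by
            rcases Nat.eq_zero_or_pos k0 with h | h
            · exfalso
              rw [h, hσ0'] at hk0eq
              have : a ≤ u := humem.1
              rw [hk0eq] at this
              exact absurd huξlt (not_lt.mpr this)
            · exact h
          obtain ⟨hgapL, hestL⟩ := hdLeft k0 hk0pos hk0le
          have hglu : |g u - gl (σ k0)| < ε' := by
            apply hestL u hfu' _ humem.1
            rw [hk0eq]; exact huξlt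
          set k1 := k0 - 1 with hk1
          have hk1s : k1 + 1 = k0 := by omega
          have hk1m : k1 < m := by omega
          have hugt : σ k1 < u := by
            have : σ (k0 - 1) < σ k0 - d k0 := hgapL
            rw [← hk1] at this
            linarith
          -- increment from u to ξ
          have hc3 : ξ = σ (k1+1) := by rw [hk1s]; exact hk0eq.symm
          have hloc2 := S.hloc gl gr g hk1m hugt.le huξlt (le_of_eq hc3)
          have hc2 : ¬ u = σ k1 := ne_of_gt hugt
          rw [if_neg hc2, if_pos hc3, if_pos hc3] at hloc2
          -- increment from ξ to v
          have hloc1 := S.hloc gl gr g hk0m (le_of_eq hk0eq) hvξ hvlt.le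
          have hc1 : ξ = σ k0 := hk0eq.symm
          have hsv : ¬ v = σ (k0+1) := ne_of_lt hvlt
          rw [if_pos hc1, if_neg hsv, if_neg hsv] at hloc1
          rw [hk1s] at hloc2
          have hEj : E j = S.φ ξ * (g v - g u) - (S.hfun gl gr g v - S.hfun gl gr g u) := rfl
          have hsplit : S.hfun gl gr g v - S.hfun gl gr g u
              = (S.hfun gl gr g v - S.hfun gl gr g ξ)
                + (S.hfun gl gr g ξ - S.hfun gl gr g u) := by ring
          have hEe : E j = (S.φ (σ k0) - S.c k0) * (g v - gr (σ k0))
              + (S.φ (σ k0) - S.c k1) * (gl (σ k0) - g u) := by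
            rw [hEj, hsplit, hloc1, hloc2, hc1]
            ring
          rw [hEe]
          apply abs_two_prod_le (hdiffM k0 hk0m k0 hk0m.le) hgrv.le
            (hdiffM k1 hk1m k0 hk0le) _ hMpos hε'pos.le
          rw [abs_sub_comm]
          exact hglu.le
      · -- v = ξ = σ k0, u < v
        have hvξ' : v = ξ := le_antisymm (not_lt.mp hvξ) hξv
        have huξlt : u < ξ := by rw [← hvξ']; exact huv
        have hk0pos : 0 < k0 := by
          rcases Nat.eq_zero_or_pos k0 with h | h
          · exfalso
            rw [h, hσ0'] at hk0eq
            have : a ≤ u := humem.1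
            rw [hk0eq] at this
            exact absurd huξlt (not_lt.mpr this)
          · exact h
        obtain ⟨hgapL, hestL⟩ := hdLeft k0 hk0pos hk0le
        have hglu : |g u - gl (σ k0)| < ε' := by
          apply hestL u hfu' _ humem.1
          rw [hk0eq]; exact huξlt
        set k1 := k0 - 1 with hk1
        have hk1s : k1 + 1 = k0 := by omega
        have hk1m : k1 < m := by omega
        have hugt : σ k1 < u := by
          have : σ (k0 - 1) < σ k0 - d k0 := hgapL
          rw [← hk1] at this
          linarith
        have hc3 : v = σ (k1+1) := by rw [hk1s, hvξ']; exact hk0eq.symm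
        have hloc2 := S.hloc gl gr g hk1m hugt.le huv (le_of_eq hc3)
        have hc2 : ¬ u = σ k1 := ne_of_gt hugt
        rw [if_neg hc2, if_pos hc3, if_pos hc3] at hloc2
        rw [hk1s] at hloc2
        have hξs : ξ = σ k0 := hk0eq.symm
        have hvs : v = σ k0 := by rw [hvξ', hξs]
        have hEj : E j = S.φ ξ * (g v - g u) - (S.hfun gl gr g v - S.hfun gl gr g u) := rfl
        have hEe : E j = (S.φ (σ k0) - S.c k1) * (gl (σ k0) - g u) + 0 * 0 := by
          rw [hEj, hloc2, hξs, hvs]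
          ring
        rw [hEe]
        apply abs_two_prod_le (hdiffM k1 hk1m k0 hk0le) _ _ _ hMpos hε'pos.le
        · rw [abs_sub_comm]; exact hglu.le
        · simpa using (by positivity : (0:ℝ) ≤ 2*M)
        · simpa using hε'pos.le
    · -- tag not a division point: zero error
      have hnoD : ∀ x ∈ S.D, x < u ∨ v < x := by
        intro x hx
        by_contra hcon
        push_neg at hcon
        obtain ⟨h1, h2⟩ := hcon
        have hxmem : x ∈ Set.Icc (ξ - δ ξ) (ξ + δ ξ) := hsub ⟨h1, h2⟩
        have hxd : |x - ξ| ≤ δ ξ := by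
          rw [abs_le]
          constructor <;> [linarith [hxmem.1]; linarith [hxmem.2]]
        have hδd : δ ξ < mind ξ := by
          simp only [hδ, if_neg hξD]
          have := hmind_pos ξ hξD
          calc min (mind ξ / 2) (1/2) ≤ mind ξ / 2 := min_le_left _ _
            _ < mind ξ := by linarith
        have := hmind_le ξ x hx
        linarith
      -- locate the subinterval in an open piece
      have hQ0 : σ 0 ≤ u := by rw [hσ0']; exact humem.1
      set k := Nat.findGreatest (fun k => σ k ≤ u) m with hkdef
      have hkspec : σ k ≤ u :=
        Nat.findGreatest_spec (P := fun k => σ k ≤ u) (Nat.zero_le _) hQ0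
      have hkle : k ≤ m := Nat.findGreatest_le _
      have hkD : σ k ∈ S.D := by
        simp only [StepData.D, Finset.mem_image, Finset.mem_range]
        exact ⟨k, by omega, rfl⟩
      have hklt : σ k < u := by
        rcases hnoD (σ k) hkD with h | h
        · exact h
        · exact absurd (le_trans hkspec huv.le) (not_le.mpr h)
      have hkm : k < m := by
        rcases Nat.lt_or_ge k m with h | h
        · exact h
        · exfalso
          have hkm' : k = m := le_antisymm hkle h
          rw [hkm', hσm'] at hkspec
          have : v ≤ b := hvmem.2
          linarith
      have hk1gt : u < σ (k+1) := by
        have := Nat.findGreatest_is_greatest (P := fun k => σ k ≤ u)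
          (Nat.lt_succ_self (Nat.findGreatest (fun k => σ k ≤ u) m))
          (Nat.succ_le_of_lt (hkdef ▸ hkm))
        rw [← hkdef] at this
        exact not_le.mp this
      have hk1D : σ (k+1) ∈ S.D := by
        simp only [StepData.D, Finset.mem_image, Finset.mem_range]
        exact ⟨k+1, by omega, rfl⟩
      have hk1v : v < σ (k+1) := by
        rcases hnoD (σ (k+1)) hk1D with h | h
        · exact absurd hk1gt (not_lt.mpr h.le)
        · exact h
      have hφξ : S.φ ξ = S.c k :=
        S.phi_eq hkm ⟨lt_of_lt_of_le hklt huξ, lt_of_le_of_lt hξv hk1v⟩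
      have hloc1 := S.hloc gl gr g hkm hklt.le huv hk1v.le
      rw [if_neg (ne_of_gt hklt), if_neg (ne_of_lt hk1v), if_neg (ne_of_lt hk1v)] at hloc1
      have hEj : E j = S.φ ξ * (g v - g u) - (S.hfun gl gr g v - S.hfun gl gr g u) := rfl
      have hEzero : E j = 0 := by
        rw [hEj, hloc1, hφξ]
        ring
      exact ⟨fun _ => hEzero, by rw [hEzero]; simp; positivity⟩
  -- assemble the bound
  rw [hRSY]
  set T := (Finset.range P.n).filter (fun j => P.tag j ∈ S.D) with hT
  have hsumT : ∑ j ∈ Finset.range P.n, E j = ∑ j ∈ T, E j := by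
    rw [hT]
    apply (Finset.sum_filter_of_ne _).symm
    intro j hj hEj
    by_contra hcontra
    exact hEj ((hmain j (Finset.mem_range.mp hj)).1 hcontra)
  have hTcard : T.card ≤ 2 * (m+1) := by
    have h1 : T.card ≤ 2 * (T.image P.tag).card := by
      apply Finset.card_le_mul_card_image
      intro x hx
      -- at most two intervals share a tag
      set F := T.filter (fun j => P.tag j = x) with hF
      have hpair : ∀ j1 ∈ F, ∀ j2 ∈ F, j1 < j2 → j2 = j1 + 1 := by
        intro j1 hj1 j2 hj2 h12
        simp only [hF, hT, Finset.mem_filter, Finset.mem_range] at hj1 hj2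
        have hj1n := hj1.1.1
        have hj2n := hj2.1.1
        have e1 : P.pts j1 ≤ x := hj1.2 ▸ (P.tag_mem j1 hj1n).1
        have e2 : x ≤ P.pts (j1+1) := hj1.2 ▸ (P.tag_mem j1 hj1n).2
        have e3 : P.pts j2 ≤ x := hj2.2 ▸ (P.tag_mem j2 hj2n).1
        have e4 : x ≤ P.pts (j2+1) := hj2.2 ▸ (P.tag_mem j2 hj2n).2
        by_contra hne
        have h12' : j1 + 1 < j2 := by omega
        have : P.pts (j1+1) < P.pts j2 := chain_strict P.pts_mono _ _ h12' hj2n.le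
        linarith
      by_cases hFe : F.Nonempty
      · have hmin := F.min'_mem hFe
        have hsub2 : F ⊆ {F.min' hFe, F.min' hFe + 1} := by
          intro j hjF
          have hge : F.min' hFe ≤ j := Finset.min'_le _ _ hjF
          rcases eq_or_lt_of_le hge with h | h
          · simp [← h]
          · have := hpair _ hmin _ hjF h
            simp [this]
        calc F.card ≤ ({F.min' hFe, F.min' hFe + 1} : Finset ℕ).card := Finset.card_le_card hsub2
          _ ≤ 2 := Finset.card_insert_le _ _ |>.trans (by simp)
      · rw [Finset.not_nonempty_iff_eq_empty.mp hFe]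
        simp
    have h2 : (T.image P.tag).card ≤ S.D.card := by
      apply Finset.card_le_card
      intro x hx
      obtain ⟨j, hj, rfl⟩ := Finset.mem_image.mp hx
      exact (Finset.mem_filter.mp hj).2
    have h3 : S.D.card ≤ m + 1 := by
      calc S.D.card ≤ (Finset.range (m+1)).card := Finset.card_image_le
        _ = m + 1 := Finset.card_range _
    omega
  calc |∑ j ∈ Finset.range P.n, E j| = |∑ j ∈ T, E j| := by rw [hsumT]
    _ ≤ ∑ j ∈ T, |E j| := Finset.abs_sum_le_sum_abs _ _
    _ ≤ T.card * (4*M*ε') := by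
        rw [← nsmul_eq_mul]
        apply Finset.sum_le_card_nsmul
        intro j hj
        simp only [hT, Finset.mem_filter, Finset.mem_range] at hj
        exact (hmain j hj.1).2
    _ ≤ (2*(m+1) : ℕ) * (4*M*ε') := by
        apply mul_le_mul_of_nonneg_right _ (by positivity)
        exact_mod_cast Nat.cast_le.mpr hTcard
    _ < ε := by
        push_cast
        rw [hε']
        have h8 : (0:ℝ) < 8*M*(m+1)+1 := by positivity
        rw [div_eq_inv_mul]
        have hrew : (2*((m:ℝ)+1)) * (4*M*((8*M*((m:ℝ)+1)+1)⁻¹ * ε))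
            = (8*M*((m:ℝ)+1)) / (8*M*((m:ℝ)+1)+1) * ε := by
          field_simp
          ring
        rw [hrew]
        have hlt : (8*M*((m:ℝ)+1)) / (8*M*((m:ℝ)+1)+1) < 1 := by
          rw [div_lt_one h8]; linarith
        nlinarith
end Stmt18
namespace Stmt18

variable {a b : ℝ}

lemma exists_refining (hab : a < b) (D : Finset ℝ) (hD : ↑D ⊆ Set.Icc a b) :
    ∃ P : TaggedPartition a b, Refines P D ∧ InteriorTags P := by
  classical
  set s : Finset ℝ := insert a (insert b D) with hs
  have hsmem : ∀ x ∈ s, x ∈ Set.Icc a b := by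
    intro x hx
    simp only [hs, Finset.mem_insert] at hx
    rcases hx with rfl | rfl | hx
    · exact ⟨le_refl x, hab.le⟩
    · exact ⟨hab.le, le_refl x⟩
    · exact hD hx
  set L : List ℝ := s.sort (· ≤ ·) with hL
  have hsort : L.Pairwise (· < ·) := (Finset.sortedLT_sort s).pairwise
  have hmemL : ∀ x, x ∈ L ↔ x ∈ s := fun x => Finset.mem_sort _
  have haL : a ∈ L := (hmemL a).mpr (by simp [hs])
  have hbL : b ∈ L := (hmemL b).mpr (by simp [hs])
  have hLne : L ≠ [] := fun h => by simp [h] at haL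
  have hlen : 2 ≤ L.length := by
    by_contra hcon
    push_neg at hcon
    interval_cases h : L.length
    · exact hLne (List.length_eq_zero_iff.mp h)
    · obtain ⟨x, hx⟩ := List.length_eq_one_iff.mp h
      rw [hx] at haL hbL
      simp at haL hbL
      exact absurd (haL ▸ hbL) hab.ne'
  set n := L.length - 1 with hn
  have hn1 : 1 ≤ n := by omega
  have hnlen : n + 1 = L.length := by omega
  -- index access
  have hget : ∀ i j : ℕ, i < j → (hj : j < L.length) → L.getD i b < L.getD j b := by
    intro i j hij hj
    have hi : i < L.length := lt_trans hij hj
    rw [List.getD_eq_getElem L b hi, List.getD_eq_getElem L b hj]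
    exact hsort.rel_get_of_lt (a := ⟨i, hi⟩) (b := ⟨j, hj⟩) hij
  -- first element is a, last is b
  have hfirst : L.getD 0 b = a := by
    obtain ⟨i, hi⟩ := List.mem_iff_get.mp haL
    have h0 : L.getD 0 b ∈ L := by
      rw [List.getD_eq_getElem L b (by omega)]
      exact List.getElem_mem _
    have h1 : a ≤ L.getD 0 b := (hsmem _ ((hmemL _).mp h0)).1
    have h2 : L.getD 0 b ≤ a := by
      rcases Nat.eq_zero_or_pos i.1 with h | h
      · rw [List.getD_eq_getElem L b (by omega)]
        have : i = ⟨0, by omega⟩ := Fin.ext h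
        rw [this] at hi
        exact le_of_eq hi
      · have := hget 0 i.1 h i.2
        rw [List.getD_eq_getElem L b i.2] at this
        have hgi : L.get i = L[i.1] := rfl
        rw [← hgi, hi] at this
        exact this.le
    exact le_antisymm h2 h1
  have hlast : L.getD n b = b := by
    obtain ⟨i, hi⟩ := List.mem_iff_get.mp hbL
    have h0 : L.getD n b ∈ L := by
      rw [List.getD_eq_getElem L b (by omega)]
      exact List.getElem_mem _
    have h1 : L.getD n b ≤ b := (hsmem _ ((hmemL _).mp h0)).2
    have h2 : b ≤ L.getD n b := by
      rcases Nat.lt_or_ge i.1 n with h | h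
      · have := hget i.1 n h (by omega)
        rw [List.getD_eq_getElem L b i.2] at this
        have hgi : L.get i = L[i.1] := rfl
        rw [← hgi, hi] at this
        exact this.le
      · have hieq : i.1 = n := by omega
        rw [List.getD_eq_getElem L b (by omega)]
        have : i = ⟨n, by omega⟩ := Fin.ext hieq
        rw [this] at hi
        exact le_of_eq hi.symm
    exact le_antisymm h1 h2
  refine ⟨⟨n, fun j => L.getD (min j n) b, fun j => (L.getD (min j n) b + L.getD (min (j+1) n) b)/2,
    hn1, ?_, ?_, ?_, ?_⟩, ?_, ?_⟩
  · show L.getD (min 0 n) b = a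
    rw [min_eq_left (Nat.zero_le n)]
    exact hfirst
  · show L.getD (min n n) b = b
    rw [min_self]
    exact hlast
  · intro j hj
    show L.getD (min j n) b < L.getD (min (j+1) n) b
    rw [min_eq_left hj.le, min_eq_left hj]
    exact hget j (j+1) (Nat.lt_succ_self j) (by omega)
  · intro j hj
    have h1 : min j n = j := min_eq_left hj.le
    have h2 : min (j+1) n = j+1 := min_eq_left hj
    have h3 := hget j (j+1) (Nat.lt_succ_self j) (by omega)
    simp only [Set.mem_Icc, h1, h2]
    constructor <;> linarith
  · intro x hx
    have hxL : x ∈ L := (hmemL x).mpr (by simp [hs, hx])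
    obtain ⟨i, hi⟩ := List.mem_iff_get.mp hxL
    have hile : i.1 ≤ n := by
      have h2 : i.1 + 1 ≤ L.length := i.2
      omega
    refine ⟨i.1, hile, ?_⟩
    show L.getD (min i.1 n) b = x
    rw [min_eq_left hile, List.getD_eq_getElem L b i.2]
    rw [← hi]
    rfl
  · intro j hj
    have h1 : min j n = j := min_eq_left hj.le
    have h2 : min (j+1) n = j+1 := min_eq_left hj
    have h3 := hget j (j+1) (Nat.lt_succ_self j) (by omega)
    refine ⟨?_, ?_⟩ <;> simp only [h1, h2] <;> linarith

end Stmt18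
namespace Stmt18

variable {a b : ℝ}

/-- a regulated function admits a division with small oscillation on open pieces -/
lemma osc_division (hab : a < b) (f : ℝ → ℝ) (hf : Regulated f a b) {ε : ℝ} (hε : 0 < ε) :
    ∃ (m : ℕ) (σ : ℕ → ℝ), 0 < m ∧ σ 0 = a ∧ σ m = b ∧ (∀ k < m, σ k < σ (k+1)) ∧
      ∀ k < m, ∀ x ∈ Set.Ioo (σ k) (σ (k+1)), ∀ y ∈ Set.Ioo (σ k) (σ (k+1)), |f x - f y| ≤ ε := by
  classical
  set Pred : ℝ → Prop := fun t => ∃ (m : ℕ) (σ : ℕ → ℝ), 0 < m ∧ σ 0 = a ∧ σ m = t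
      ∧ (∀ k < m, σ k < σ (k+1))
      ∧ ∀ k < m, ∀ x ∈ Set.Ioo (σ k) (σ (k+1)), ∀ y ∈ Set.Ioo (σ k) (σ (k+1)), |f x - f y| ≤ ε
    with hPred
  -- extension of a division by one piece
  have hext : ∀ t t', Pred t → t < t' →
      (∀ x ∈ Set.Ioo t t', ∀ y ∈ Set.Ioo t t', |f x - f y| ≤ ε) → Pred t' := by
    rintro t t' ⟨m, σ, hm, h0, hmt, hmono, hosc⟩ htt' hosc'
    refine ⟨m+1, fun k => if k ≤ m then σ k else t', by omega, ?_, ?_, ?_, ?_⟩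
    · simp only [if_pos (Nat.zero_le m)]; exact h0
    · simp only [if_neg (by omega : ¬ m+1 ≤ m)]
    · intro k hk
      by_cases hkm : k < m
      · simp only [if_pos hkm.le, if_pos (by omega : k+1 ≤ m)]
        exact hmono k hkm
      · have hkm' : k = m := by omega
        subst hkm'
        simp only [if_pos le_rfl, if_neg (by omega : ¬ k+1 ≤ k), hmt]
        exact htt'
    · intro k hk x hx y hy
      by_cases hkm : k < m
      · simp only [if_pos hkm.le, if_pos (by omega : k+1 ≤ m)] at hx hy
        exact hosc k hkm x hx y hy
      · have hkm' : k = m := by omega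
        subst hkm'
        simp only [if_pos le_rfl, if_neg (by omega : ¬ k+1 ≤ k), hmt] at hx hy
        exact hosc' x hx y hy
  -- an initial piece
  set Sset : Set ℝ := {t | t ∈ Set.Ioc a b ∧ Pred t} with hSset
  have hinit : ∃ t0, t0 ∈ Sset := by
    obtain ⟨L, hL⟩ := hf.2 a ⟨le_rfl, hab⟩
    obtain ⟨d, hd, H⟩ := Metric.tendsto_nhdsWithin_nhds.mp hL (ε/2) (by linarith)
    set t0 := min (a + d/2) b with ht0
    have ht0a : a < t0 := by
      rw [ht0]; exact lt_min (by linarith) hab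
    have ht0b : t0 ≤ b := min_le_right _ _
    refine ⟨t0, ⟨ht0a, ht0b⟩, 1, fun k => if k = 0 then a else t0, one_pos, by simp, by simp, ?_, ?_⟩
    · intro k hk
      have hk0 : k = 0 := by omega
      subst hk0
      simpa using ht0a
    · intro k hk x hx y hy
      have hk0 : k = 0 := by omega
      subst hk0
      simp only [if_pos rfl, if_neg (by omega : ¬ (0:ℕ)+1 = 0)] at hx hy
      have hclose : ∀ z ∈ Set.Ioo a t0, |f z - L| < ε/2 := by
        intro z hz
        have hz1 : z ∈ Set.Ioc a b := ⟨hz.1, le_trans hz.2.le ht0b⟩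
        have hz2 : dist z a < d := by
          rw [Real.dist_eq, abs_of_pos (sub_pos.mpr hz.1)]
          have : z < a + d/2 := lt_of_lt_of_le hz.2 (min_le_left _ _)
          linarith
        have := H hz1 hz2
        rwa [Real.dist_eq] at this
      have h1 := hclose x hx
      have h2 := hclose y hy
      calc |f x - f y| ≤ |f x - L| + |L - f y| := abs_sub_le _ _ _
        _ ≤ ε/2 + ε/2 := by
            rw [abs_sub_comm L (f y)]
            exact add_le_add h1.le h2.le
        _ = ε := by ring
  obtain ⟨t0, ht0S⟩ := hinit
  have hbdd : BddAbove Sset := ⟨b, fun t ht => ht.1.2⟩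
  have hne : Sset.Nonempty := ⟨t0, ht0S⟩
  set c := sSup Sset with hc
  have hcb : c ≤ b := csSup_le hne (fun t ht => ht.1.2)
  have hca : a < c := lt_of_lt_of_le ht0S.1.1 (le_csSup hbdd ht0S)
  -- c belongs to Sset
  have hcS : Pred c := by
    obtain ⟨L, hL⟩ := hf.1 c ⟨hca, hcb⟩
    obtain ⟨d, hd, H⟩ := Metric.tendsto_nhdsWithin_nhds.mp hL (ε/2) (by linarith)
    have hlt : c - min d (c - a) / 2 < c := by
      have h1 : 0 < min d (c - a) := lt_min hd (by linarith)
      linarith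
    obtain ⟨t, htS, htgt⟩ := exists_lt_of_lt_csSup hne hlt
    have htc : t ≤ c := le_csSup hbdd htS
    rcases eq_or_lt_of_le htc with rfl | htc'
    · exact htS.2
    · apply hext t c htS.2 htc'
      intro x hx y hy
      have hclose : ∀ z ∈ Set.Ioo t c, |f z - L| < ε/2 := by
        intro z hz
        have hz1 : z ∈ Set.Ico a c := by
          constructor
          · have : a < t := htS.1.1
            linarith [hz.1]
          · exact hz.2
        have hz2 : dist z c < d := by
          rw [Real.dist_eq, abs_of_neg (sub_neg.mpr hz.2)]
          have h3 : min d (c - a) ≤ d := min_le_left _ _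
          have : c - min d (c - a) / 2 < z := lt_trans htgt hz.1
          linarith
        have := H hz1 hz2
        rwa [Real.dist_eq] at this
      have h1 := hclose x hx
      have h2 := hclose y hy
      calc |f x - f y| ≤ |f x - L| + |L - f y| := abs_sub_le _ _ _
        _ ≤ ε/2 + ε/2 := by
            rw [abs_sub_comm L (f y)]
            exact add_le_add h1.le h2.le
        _ = ε := by ring
  -- c must equal b
  have hcbeq : c = b := by
    by_contra hne'
    have hcb' : c < b := lt_of_le_of_ne hcb hne'
    obtain ⟨L, hL⟩ := hf.2 c ⟨hca.le, hcb'⟩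
    obtain ⟨d, hd, H⟩ := Metric.tendsto_nhdsWithin_nhds.mp hL (ε/2) (by linarith)
    set c' := min (c + d/2) b with hc'
    have hcc' : c < c' := lt_min (by linarith) hcb'
    have hc'b : c' ≤ b := min_le_right _ _
    have hPc' : Pred c' := by
      apply hext c c' hcS hcc'
      intro x hx y hy
      have hclose : ∀ z ∈ Set.Ioo c c', |f z - L| < ε/2 := by
        intro z hz
        have hz1 : z ∈ Set.Ioc c b := ⟨hz.1, le_trans hz.2.le hc'b⟩
        have hz2 : dist z c < d := by
          rw [Real.dist_eq, abs_of_pos (sub_pos.mpr hz.1)]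
          have : z < c + d/2 := lt_of_lt_of_le hz.2 (min_le_left _ _)
          linarith
        have := H hz1 hz2
        rwa [Real.dist_eq] at this
      have h1 := hclose x hx
      have h2 := hclose y hy
      calc |f x - f y| ≤ |f x - L| + |L - f y| := abs_sub_le _ _ _
        _ ≤ ε/2 + ε/2 := by
            rw [abs_sub_comm L (f y)]
            exact add_le_add h1.le h2.le
        _ = ε := by ring
    have : c' ≤ c := le_csSup hbdd ⟨⟨lt_trans hca hcc', hc'b⟩, hPc'⟩
    exact absurd hcc' (not_lt.mpr this)
  obtain ⟨m, σ, hm, h0, hmt, hmono, hosc⟩ := hcS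
  exact ⟨m, σ, hm, h0, by rw [hmt, hcbeq], hmono, hosc⟩

/-- approximation of a regulated function by a step function -/
lemma step_approx (hab : a < b) (f : ℝ → ℝ) (hf : Regulated f a b) {ε : ℝ} (hε : 0 < ε) :
    ∃ S : StepData a b, ∀ x ∈ Set.Icc a b, |f x - S.φ x| ≤ ε := by
  classical
  obtain ⟨m, σ, hm, h0, hmb, hmono, hosc⟩ := osc_division hab f hf hε
  set K : ℝ → ℕ := fun x => Nat.findGreatest (fun k => σ k < x) m with hK
  set mid : ℕ → ℝ := fun k => (σ k + σ (k+1))/2 with hmid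
  set φ : ℝ → ℝ := fun x => if (∃ k ≤ m, σ k = x) ∨ x ≤ a ∨ b ≤ x then f x
    else f (mid (K x)) with hφ
  -- φ is constant f (mid k) on each open piece
  have hpiece : ∀ k < m, ∀ x ∈ Set.Ioo (σ k) (σ (k+1)), φ x = f (mid k) := by
    intro k hk x hx
    have hcond : ¬ ((∃ k' ≤ m, σ k' = x) ∨ x ≤ a ∨ b ≤ x) := by
      push_neg
      refine ⟨?_, ?_, ?_⟩
      · rintro k' hk' rfl
        rcases Nat.lt_or_ge k' (k+1) with h | h
        · have : σ k' ≤ σ k := chain_mono hmono k' k (by omega) hk.le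
          exact absurd hx.1 (not_lt.mpr this)
        · have : σ (k+1) ≤ σ k' := chain_mono hmono (k+1) k' h hk'
          exact absurd hx.2 (not_lt.mpr this)
      · have : a ≤ σ k := by
          rw [← h0]; exact chain_mono hmono 0 k (Nat.zero_le _) hk.le
        linarith [hx.1]
      · have : σ (k+1) ≤ b := by
          rw [← hmb]; exact chain_mono hmono (k+1) m hk le_rfl
        linarith [hx.2]
    have hKx : K x = k := by
      have h1 : k ≤ K x := Nat.le_findGreatest hk.le hx.1
      have h2 : K x ≤ m := Nat.findGreatest_le _
      by_contra hne
      have h3 : k + 1 ≤ K x := by omega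
      have h4 : σ (K x) < x :=
        Nat.findGreatest_spec (P := fun k => σ k < x) (m := k) hk.le hx.1
      have h5 : σ (k+1) ≤ σ (K x) := chain_mono hmono (k+1) (K x) h3 h2
      linarith [hx.2]
    simp only [hφ, if_neg hcond, hKx]
  refine ⟨⟨m, σ, φ, hm, h0, hmb, hmono, ?_⟩, ?_⟩
  · intro k hk x hx y hy
    rw [hpiece k hk x hx, hpiece k hk y hy]
  · intro x hx
    simp only
    by_cases hcond : (∃ k ≤ m, σ k = x) ∨ x ≤ a ∨ b ≤ x
    · simp only [hφ, if_pos hcond]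
      simp [hε.le]
    · push_neg at hcond
      obtain ⟨hnode, hxa, hxb⟩ := hcond
      have hKspec : σ (K x) < x :=
        Nat.findGreatest_spec (P := fun k => σ k < x) (Nat.zero_le m) (by show σ 0 < x; rw [h0]; exact hxa)
      have hKle : K x ≤ m := Nat.findGreatest_le _
      have hKm : K x < m := by
        rcases eq_or_lt_of_le hKle with h | h
        · exfalso
          rw [h, hmb] at hKspec
          linarith
        · exact h
      have hgt : x ≤ σ (K x + 1) := by
        have := Nat.findGreatest_is_greatest (P := fun k => σ k < x)
          (Nat.lt_succ_self (Nat.findGreatest (fun k => σ k < x) m))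
          (Nat.succ_le_of_lt (show Nat.findGreatest (fun k => σ k < x) m < m from hKm))
        exact not_lt.mp this
      have hlt : x < σ (K x + 1) :=
        lt_of_le_of_ne hgt (fun h => hnode (K x + 1) (by omega) h.symm)
      have hxmem : x ∈ Set.Ioo (σ (K x)) (σ (K x + 1)) := ⟨hKspec, hlt⟩
      have hmidmem : mid (K x) ∈ Set.Ioo (σ (K x)) (σ (K x + 1)) := by
        have := hmono (K x) hKm
        constructor <;> (simp only [hmid]; linarith)
      have hφx : φ x = f (mid (K x)) := hpiece (K x) hKm x hxmem
      rw [hφx]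
      exact hosc (K x) hKm x hxmem (mid (K x)) hmidmem

end Stmt18
open Stmt18 in
/-- for regulated `f` and regulated `g` of bounded variation,
the Young integral `(Y)∫_a^b f dg` and `(K)∫_a^b f dg` both exist and agree
(`gl`, `gr` are the one-sided limit functions of `g`). -/
theorem stmt18 (a b : ℝ) (hab : a < b) (f g gl gr : ℝ → ℝ)
    (hf : Regulated f a b) (hreg : Regulated g a b)
    (hgbv : BoundedVariationOn g (Set.Icc a b))
    (hgl : ∀ t ∈ Set.Ioc a b, Filter.Tendsto g (nhdsWithin t (Set.Ico a t)) (nhds (gl t)))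
    (hgr : ∀ t ∈ Set.Ico a b, Filter.Tendsto g (nhdsWithin t (Set.Ioc t b)) (nhds (gr t))) :
    ∃ I : ℝ, HasYoung f gl gr g a b I ∧ HasKS f g a b I := by
  classical
  have happrox : ∀ n : ℕ, ∃ S : StepData a b,
      ∀ x ∈ Set.Icc a b, |f x - S.φ x| ≤ 1/(n+1) :=
    fun n => step_approx hab f hf (by positivity)
  choose Sn hSn using happrox
  set K := var g a b with hKdef
  have hK0 : 0 ≤ K := ENNReal.toReal_nonneg
  set Y : ℕ → ℝ := fun n => (Sn n).Yval gl gr g with hY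
  have hstep : ∀ n : ℕ, (0:ℝ) < 1/(n+1) := fun n => by positivity
  -- comparing Young values of two approximations
  have hYd : ∀ n n' : ℕ, |Y n - Y n'| ≤ (1/(n+1) + 1/(n'+1)) * K := by
    intro n n'
    set D := (Sn n).D ∪ (Sn n').D with hD
    have hDsub : ↑D ⊆ Set.Icc a b := by
      rw [hD, Finset.coe_union]
      exact Set.union_subset ((Sn n).D_subset) ((Sn n').D_subset)
    obtain ⟨P, href, hint⟩ := exists_refining hab D hDsub
    have h1 : Refines P (Sn n).D := fun x hx =>
      href x (Finset.mem_union_left _ hx)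
    have h2 : Refines P (Sn n').D := fun x hx =>
      href x (Finset.mem_union_right _ hx)
    have e1 : YS (Sn n).φ gl gr g P = Y n := young_exact (Sn n) gl gr g P h1 hint
    have e2 : YS (Sn n').φ gl gr g P = Y n' := young_exact (Sn n') gl gr g P h2 hint
    rw [← e1, ← e2]
    have d1 : |YS f gl gr g P - YS (Sn n).φ gl gr g P| ≤ (1/(n+1)) * K :=
      YS_diff f (Sn n).φ gl gr g hgbv hgl hgr P (hstep n).le (hSn n)
    have d2 : |YS f gl gr g P - YS (Sn n').φ gl gr g P| ≤ (1/(n'+1)) * K :=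
      YS_diff f (Sn n').φ gl gr g hgbv hgl hgr P (hstep n').le (hSn n')
    calc |YS (Sn n).φ gl gr g P - YS (Sn n').φ gl gr g P|
        ≤ |YS (Sn n).φ gl gr g P - YS f gl gr g P|
          + |YS f gl gr g P - YS (Sn n').φ gl gr g P| := abs_sub_le _ _ _
      _ ≤ (1/(n+1)) * K + (1/(n'+1)) * K := by
          rw [abs_sub_comm]
          exact add_le_add d1 d2
      _ = (1/(n+1) + 1/(n'+1)) * K := by ring
  have hkey : ∀ N : ℕ, ∀ n ≥ N, (1:ℝ)/(n+1) ≤ 1/(N+1) := by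
    intro N n hn
    have h1 : (N:ℝ) ≤ n := Nat.cast_le.mpr hn
    apply one_div_le_one_div_of_le (by positivity)
    linarith
  -- Y is Cauchy, hence converges
  have hcauchy : CauchySeq Y := by
    rw [Metric.cauchySeq_iff]
    intro ε hε
    obtain ⟨N, hN⟩ := exists_nat_gt (2*(K+1)/ε)
    refine ⟨N, fun n hn n' hn' => ?_⟩
    rw [Real.dist_eq]
    have hNε : 2*(K+1) < ((N:ℝ)+1)*ε := by
      rw [div_lt_iff₀ hε] at hN
      nlinarith
    calc |Y n - Y n'| ≤ (1/(n+1) + 1/(n'+1)) * K := hYd n n'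
      _ ≤ (1/(N+1) + 1/(N+1)) * K :=
          mul_le_mul_of_nonneg_right (add_le_add (hkey N n hn) (hkey N n' hn')) hK0
      _ = 2*K/(N+1) := by ring
      _ < ε := by
          rw [div_lt_iff₀ (by positivity : (0:ℝ) < (N:ℝ)+1)]
          nlinarith
  obtain ⟨I, hI⟩ := cauchySeq_tendsto_of_complete hcauchy
  have hYI : ∀ n : ℕ, |Y n - I| ≤ (1/(n+1))*K := by
    intro n
    apply le_of_forall_pos_le_add
    intro θ hθ
    obtain ⟨N1, hN1⟩ := Metric.tendsto_atTop.mp hI (θ/2) (by linarith)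
    obtain ⟨M, hM⟩ := exists_nat_gt (2*K/θ)
    set n' := max N1 M with hn'
    have hc1 : |Y n' - I| < θ/2 := by
      have := hN1 n' (le_max_left _ _)
      rwa [Real.dist_eq] at this
    have hc2 : (1/((n':ℝ)+1))*K ≤ θ/2 := by
      have h1 : (1:ℝ)/(n'+1) ≤ 1/(M+1) := hkey M n' (le_max_right _ _)
      have h2 : (1/((M:ℝ)+1))*K ≤ θ/2 := by
        rw [div_mul_eq_mul_div, div_le_iff₀ (by positivity : (0:ℝ) < (M:ℝ)+1)]
        rw [div_lt_iff₀ hθ] at hM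
        nlinarith
      calc (1/((n':ℝ)+1))*K ≤ (1/((M:ℝ)+1))*K := mul_le_mul_of_nonneg_right h1 hK0
        _ ≤ θ/2 := h2
    calc |Y n - I| ≤ |Y n - Y n'| + |Y n' - I| := abs_sub_le _ _ _
      _ ≤ (1/(n+1) + 1/(n'+1)) * K + θ/2 := add_le_add (hYd n n') hc1.le
      _ = (1/(n+1))*K + ((1/(n'+1))*K + θ/2) := by ring
      _ ≤ (1/(n+1))*K + θ := by linarith
  refine ⟨I, ?_, ?_⟩
  · -- the Young integral
    intro ε hε
    obtain ⟨n, hn⟩ := exists_nat_gt (2*(K+1)/ε)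
    have hnε : 2*(K+1) < ((n:ℝ)+1)*ε := by
      rw [div_lt_iff₀ hε] at hn
      nlinarith
    refine ⟨(Sn n).D, (Sn n).D_subset, ?_⟩
    intro P href hint
    have e1 : YS (Sn n).φ gl gr g P = Y n := young_exact (Sn n) gl gr g P href hint
    have d1 : |YS f gl gr g P - YS (Sn n).φ gl gr g P| ≤ (1/(n+1)) * K :=
      YS_diff f (Sn n).φ gl gr g hgbv hgl hgr P (hstep n).le (hSn n)
    calc |YS f gl gr g P - I|
        ≤ |YS f gl gr g P - YS (Sn n).φ gl gr g P| + |YS (Sn n).φ gl gr g P - I| :=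
          abs_sub_le _ _ _
      _ ≤ (1/(n+1))*K + (1/(n+1))*K := by
          rw [e1]
          rw [e1] at d1
          exact add_le_add d1 (hYI n)
      _ = 2*K/(n+1) := by ring
      _ < ε := by
          rw [div_lt_iff₀ (by positivity : (0:ℝ) < (n:ℝ)+1)]
          nlinarith
  · -- the Kurzweil--Stieltjes integral
    intro ε hε
    obtain ⟨n, hn⟩ := exists_nat_gt (4*(K+1)/ε)
    have hnε : 4*(K+1) < ((n:ℝ)+1)*ε := by
      rw [div_lt_iff₀ hε] at hn
      nlinarith
    obtain ⟨δ, hδ1, hδ2⟩ := ks_step hab (Sn n) gl gr g hgl hgr (half_pos hε)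
    refine ⟨δ, hδ1, ?_⟩
    intro P hP
    have d1 : |RS f g P - RS (Sn n).φ g P| ≤ (1/(n+1)) * K :=
      RS_diff f (Sn n).φ g hgbv P (hstep n).le (hSn n)
    have d2 : |RS (Sn n).φ g P - Y n| < ε/2 := hδ2 P hP
    have d3 : |Y n - I| ≤ (1/(n+1))*K := hYI n
    calc |RS f g P - I|
        ≤ |RS f g P - RS (Sn n).φ g P| + |RS (Sn n).φ g P - I| := abs_sub_le _ _ _
      _ ≤ |RS f g P - RS (Sn n).φ g P| + (|RS (Sn n).φ g P - Y n| + |Y n - I|) := by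
          have := abs_sub_le (RS (Sn n).φ g P) (Y n) I
          linarith
      _ ≤ (1/(n+1))*K + (ε/2 + (1/(n+1))*K) := by
          exact add_le_add d1 (add_le_add d2.le d3)
      _ = 2*K/(n+1) + ε/2 := by ring
      _ < ε := by
          have h1 : 2*K/((n:ℝ)+1) < ε/2 := by
            rw [div_lt_iff₀ (by positivity : (0:ℝ) < (n:ℝ)+1)]
            nlinarith
          linarith
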